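/- Let f: ℝⁿ → ℝ be strongly convex, C ⊂ ℝⁿ nonempty closed convex, x ∈ ℝⁿ, x* ∈ ∂f(x). A point x̂ ∈ C equals the Bregman projection Π_C^{x*}(x) if and only if there exists x̂* ∈ ∂f(x̂) with ⟨x̂* − x*, y − x̂⟩ ≥ 0 for all y ∈ C. -/

import Mathlib

open RealInnerProductSpace

theorem aux_sep {n : ℕ} (p : EuclideanSpace ℝ (Fin n) → ℝ)
    (hpconv : ConvexOn ℝ Set.univ p) (hpcont : Continuous p) (hp0 : p 0 = 0)
    (S : Set (EuclideanSpace ℝ (Fin n))) (hS : Convex ℝ S) (h0S : (0 : _) ∈ S)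
    (hpS : ∀ s ∈ S, 0 ≤ p s) :
    ∃ w : EuclideanSpace ℝ (Fin n), (∀ d, ⟪w, d⟫ ≤ p d) ∧ ∀ s ∈ S, 0 ≤ ⟪w, s⟫ := by
  classical
  set A : Set (EuclideanSpace ℝ (Fin n) × ℝ) := {q | p q.1 < q.2} with hA
  set B : Set (EuclideanSpace ℝ (Fin n) × ℝ) := S ×ˢ ({0} : Set ℝ) with hB
  have hAopen : IsOpen A := isOpen_lt (by fun_prop) continuous_snd
  have hAconv : Convex ℝ A := by
    intro a ha b hb μ ν hμ hν hμν
    have h1 := hpconv.2 (Set.mem_univ a.1) (Set.mem_univ b.1) hμ hν hμν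
    simp only [smul_eq_mul] at h1
    have h2 : μ * p a.1 + ν * p b.1 < μ * a.2 + ν * b.2 := by
      rcases eq_or_lt_of_le hμ with h | h
      · rcases eq_or_lt_of_le hν with h' | h'
        · exfalso; rw [← h, ← h'] at hμν; norm_num at hμν
        · rw [← h]; simp only [zero_mul, zero_add]
          exact mul_lt_mul_of_pos_left hb h'
      · rcases eq_or_lt_of_le hν with h' | h'
        · rw [← h']; simp only [zero_mul, add_zero]
          exact mul_lt_mul_of_pos_left ha h
        · exact add_lt_add (mul_lt_mul_of_pos_left ha h) (mul_lt_mul_of_pos_left hb h')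
    exact lt_of_le_of_lt h1 h2
  have hBconv : Convex ℝ B := hS.prod (convex_singleton 0)
  have hdisj : Disjoint A B := by
    rw [Set.disjoint_left]
    rintro ⟨d, t⟩ hq ⟨hdS, ht⟩
    simp only [Set.mem_singleton_iff] at ht
    subst ht
    exact absurd hq (not_lt.mpr (hpS d hdS))
  obtain ⟨φ, c, hφA, hφB⟩ := geometric_hahn_banach_open hAconv hAopen hBconv hdisj
  set s : ℝ := φ (0, 1) with hs
  have hdec : ∀ (d : EuclideanSpace ℝ (Fin n)) (t : ℝ), φ (d, t) = φ (d, 0) + t * s := by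
    intro d t
    have he : (d, t) = (d, (0:ℝ)) + t • ((0:EuclideanSpace ℝ (Fin n)), (1:ℝ)) := by
      simp [Prod.ext_iff]
    rw [he, map_add, map_smul]
    simp [hs, smul_eq_mul]
  have hc0 : φ ((0:EuclideanSpace ℝ (Fin n)), 0) = 0 := by exact map_zero φ
  have hcle : c ≤ 0 := by
    have := hφB (0, 0) ⟨h0S, rfl⟩
    rwa [hc0] at this
  have hst : ∀ t : ℝ, 0 < t → t * s < c := by
    intro t ht
    have hmem : ((0:EuclideanSpace ℝ (Fin n)), t) ∈ A := by simp [hA, hp0, ht]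
    have := hφA _ hmem
    rwa [hdec, hc0, zero_add] at this
  have hsneg : s < 0 := by
    by_contra h
    push_neg at h
    have := hst 1 one_pos
    nlinarith
  have hs0 : s ≠ 0 := ne_of_lt hsneg
  have hcge : 0 ≤ c := by
    by_contra h
    push_neg at h
    have ht : 0 < c / (2*s) := div_pos_of_neg_of_neg h (by linarith)
    have := hst _ ht
    have he : c / (2*s) * s = c / 2 := by field_simp
    rw [he] at this
    linarith
  have hceq : c = 0 := le_antisymm hcle hcge
  subst hceq
  set g : EuclideanSpace ℝ (Fin n) →L[ℝ] ℝ :=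
    (-s)⁻¹ • (φ.comp (ContinuousLinearMap.inl ℝ (EuclideanSpace ℝ (Fin n)) ℝ)) with hg
  refine ⟨(InnerProductSpace.toDual ℝ (EuclideanSpace ℝ (Fin n))).symm g, ?_, ?_⟩
  · intro d
    rw [InnerProductSpace.toDual_symm_apply]
    have key : φ (d, 0) + p d * s ≤ 0 := by
      by_contra h
      push_neg at h
      set ε : ℝ := (φ (d, 0) + p d * s) / (-2*s) with hε
      have hεpos : 0 < ε := div_pos h (by linarith)
      have hmem : (d, p d + ε) ∈ A := by simp [hA, hεpos]
      have hlt := hφA _ hmem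
      rw [hdec] at hlt
      have hsε : ε * s = -(φ (d, 0) + p d * s)/2 := by
        rw [hε]; field_simp
      nlinarith [hlt]
    simp only [hg, ContinuousLinearMap.smul_apply, ContinuousLinearMap.comp_apply,
      ContinuousLinearMap.inl_apply, smul_eq_mul]
    rw [inv_mul_le_iff₀ (by linarith : (0:ℝ) < -s)]
    nlinarith [key]
  · intro y hy
    rw [InnerProductSpace.toDual_symm_apply]
    have h1 : (0:ℝ) ≤ φ (y, 0) := hφB (y, 0) ⟨hy, rfl⟩
    simp only [hg, ContinuousLinearMap.smul_apply, ContinuousLinearMap.comp_apply,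
      ContinuousLinearMap.inl_apply, smul_eq_mul]
    exact mul_nonneg (inv_nonneg.mpr (by linarith)) h1

/-- variational characterization of the Bregman projection. -/
theorem stmt_3 {n : ℕ} (f : EuclideanSpace ℝ (Fin n) → ℝ) (α : ℝ) (hα : 0 < α)
    (hconv : ConvexOn ℝ Set.univ f)
    (hsc : ∀ x y xs : EuclideanSpace ℝ (Fin n),
      (∀ z, f x + ⟪xs, z - x⟫ ≤ f z) →
      f x + ⟪xs, y - x⟫ + α / 2 * ‖y - x‖ ^ 2 ≤ f y)
    (C : Set (EuclideanSpace ℝ (Fin n))) (hC : C.Nonempty) (hCc : IsClosed C)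
    (hCconv : Convex ℝ C)
    (x xs : EuclideanSpace ℝ (Fin n))
    (hxs : ∀ z, f x + ⟪xs, z - x⟫ ≤ f z)
    (xhat : EuclideanSpace ℝ (Fin n)) (hxhat : xhat ∈ C) :
    (∀ y ∈ C, f xhat - f x - ⟪xs, xhat - x⟫ ≤ f y - f x - ⟪xs, y - x⟫) ↔
    (∃ xhs : EuclideanSpace ℝ (Fin n), (∀ z, f xhat + ⟪xhs, z - xhat⟫ ≤ f z) ∧
      ∀ y ∈ C, 0 ≤ ⟪xhs - xs, y - xhat⟫) := by
  have hinner : ∀ y : EuclideanSpace ℝ (Fin n),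
      ⟪xs, y - x⟫ - ⟪xs, xhat - x⟫ = ⟪xs, y - xhat⟫ := by
    intro y
    rw [← inner_sub_right]
    congr 1
    abel
  constructor
  · intro hmin
    set p : EuclideanSpace ℝ (Fin n) → ℝ :=
      fun d => f (xhat + d) - f xhat - ⟪xs, d⟫ with hp
    have hpconv : ConvexOn ℝ Set.univ p := by
      refine ⟨convex_univ, ?_⟩
      intro a _ b _ μ ν hμ hν hμν
      have h1 : f (xhat + (μ • a + ν • b)) ≤ μ * f (xhat + a) + ν * f (xhat + b) := by
        have h := hconv.2 (Set.mem_univ (xhat + a)) (Set.mem_univ (xhat + b)) hμ hν hμν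
        have he : μ • (xhat + a) + ν • (xhat + b) = xhat + (μ • a + ν • b) := by
          rw [smul_add, smul_add, show μ • xhat + μ • a + (ν • xhat + ν • b)
            = (μ + ν) • xhat + (μ • a + ν • b) by rw [add_smul]; abel, hμν, one_smul]
        rw [he] at h
        simpa [smul_eq_mul] using h
      have h2 : ⟪xs, μ • a + ν • b⟫ = μ * ⟪xs, a⟫ + ν * ⟪xs, b⟫ := by
        rw [inner_add_right, real_inner_smul_right, real_inner_smul_right]
      have h3 : μ * f xhat + ν * f xhat = f xhat := by rw [← add_mul, hμν, one_mul]
      simp only [hp, smul_eq_mul, h2]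
      linarith [h1, h3]
    have hpcont : Continuous p := by
      have hf : Continuous f := by
        have h := hconv.continuousOn isOpen_univ
        exact continuousOn_univ.mp h
      rw [hp]
      exact ((hf.comp (continuous_const.add continuous_id)).sub continuous_const).sub
        (Continuous.inner continuous_const continuous_id)
    have hp0 : p 0 = 0 := by simp [hp]
    set S : Set (EuclideanSpace ℝ (Fin n)) := (fun y => y - xhat) '' C with hSdef
    have hSconv : Convex ℝ S := by
      have he : S = (fun y => -xhat + y) '' C := by
        ext z
        simp [hSdef, sub_eq_add_neg, add_comm]
      rw [he]
      exact hCconv.translate (-xhat)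
    have h0S : (0 : EuclideanSpace ℝ (Fin n)) ∈ S := ⟨xhat, hxhat, sub_self xhat⟩
    have hpS : ∀ s ∈ S, 0 ≤ p s := by
      rintro s ⟨y, hyC, rfl⟩
      have h := hmin y hyC
      have h4 := hinner y
      simp only [hp, add_sub_cancel]
      linarith
    obtain ⟨w, hw1, hw2⟩ := aux_sep p hpconv hpcont hp0 S hSconv h0S hpS
    refine ⟨xs + w, ?_, ?_⟩
    · intro z
      have h := hw1 (z - xhat)
      simp only [hp, add_sub_cancel] at h
      rw [inner_add_left]
      linarith
    · intro y hy
      have h := hw2 (y - xhat) ⟨y, hy, rfl⟩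
      simpa using h
  · intro ⟨xhs, hsub, hvi⟩ y hy
    have h1 := hsub y
    have h2 := hvi y hy
    rw [inner_sub_left] at h2
    have h4 := hinner y
    linarith
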